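/- Let n ≥ 1 and let Δ ⊂ ℝ^{1+n} be the root system of osp(2|2n). Define: P(0) := {±δ_k ± δ_l : k ≠ l} ∪ {±2δ_k} ∪ {ε₁ ± δ_k : all k}, and −P(0) := {−α : α ∈ P(0)}; P(n) := {δ_k − δ_l : k ≠ l} ∪ {±(ε₁ − δ_k) : all k} ∪ {δ_k + δ_l : k ≠ l} ∪ {2δ_k : all k} ∪ {ε₁ + δ_k : all k}; and P̄(n) := {δ_k − δ_l : k ≠ l} ∪ {±(ε₁ + δ_k) : all k} ∪ {δ_k + δ_l : k ≠ l} ∪ {2δ_k : all k} ∪ {−ε₁ + δ_k : all k}. Then a subset P ⊆ Δ is a cominuscule parabolic set of roots of Δ if and only if w(P) ∈ {P(0), −P(0), P(n), P̄(n)} for some w ∈ W; each of these four sets is itself a cominuscule parabolic set of roots, and no two of them lie in the same W-orbit. -/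
import Mathlib


open Pointwise

/-- A proper subset `P` of a symmetric root set `Δ` is a parabolic set of roots if
`Δ = P ∪ (-P)` and `P` is closed under sums lying in `Δ`. -/
def IsParabolic {V : Type*} [AddCommGroup V] (Δ P : Set V) : Prop :=
  P ⊂ Δ ∧ Δ = P ∪ (-P) ∧ ∀ α ∈ P, ∀ β ∈ P, α + β ∈ Δ → α + β ∈ P

/-- A parabolic set of roots is cominuscule if the sum of any two elements of its
nilradical `N⁺ = P \ (-P)` is not a root. -/
def IsCominuscule {V : Type*} [AddCommGroup V] (Δ P : Set V) : Prop :=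
  IsParabolic Δ P ∧ ∀ α ∈ P \ (-P), ∀ β ∈ P \ (-P), α + β ∉ Δ

namespace Osp2

variable {n : ℕ}

/-- `ℝ^{1+n}`, with coordinates indexed by `Fin 1 ⊕ Fin n`. -/
abbrev V (n : ℕ) := (Fin 1 ⊕ Fin n) → ℝ

noncomputable def ε₁ : V n := Pi.single (Sum.inl 0) 1

noncomputable def δ (k : Fin n) : V n := Pi.single (Sum.inr k) 1

/-- The root system of `osp(2|2n)`. -/
noncomputable def Δroot (n : ℕ) : Set (V n) :=
  {v | ∃ k l : Fin n, k ≠ l ∧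
      (v = δ k + δ l ∨ v = δ k - δ l ∨ v = -δ k + δ l ∨ v = -δ k - δ l)} ∪
  {v | ∃ k : Fin n, v = (2 : ℝ) • δ k ∨ v = -((2 : ℝ) • δ k)} ∪
  {v | ∃ k : Fin n, v = ε₁ + δ k ∨ v = ε₁ - δ k ∨ v = -ε₁ + δ k ∨ v = -ε₁ - δ k}

/-- `P(0)`. -/
noncomputable def P0 (n : ℕ) : Set (V n) :=
  {v | ∃ k l : Fin n, k ≠ l ∧
      (v = δ k + δ l ∨ v = δ k - δ l ∨ v = -δ k + δ l ∨ v = -δ k - δ l)} ∪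
  {v | ∃ k : Fin n, v = (2 : ℝ) • δ k ∨ v = -((2 : ℝ) • δ k)} ∪
  {v | ∃ k : Fin n, v = ε₁ + δ k ∨ v = ε₁ - δ k}

/-- `P(n)`. -/
noncomputable def Pn (n : ℕ) : Set (V n) :=
  {v | ∃ k l : Fin n, k ≠ l ∧ v = δ k - δ l} ∪
  {v | ∃ k : Fin n, v = ε₁ - δ k ∨ v = δ k - ε₁} ∪
  {v | ∃ k l : Fin n, k ≠ l ∧ v = δ k + δ l} ∪
  {v | ∃ k : Fin n, v = (2 : ℝ) • δ k} ∪
  {v | ∃ k : Fin n, v = ε₁ + δ k}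

/-- `P̄(n)`. -/
noncomputable def Pnbar (n : ℕ) : Set (V n) :=
  {v | ∃ k l : Fin n, k ≠ l ∧ v = δ k - δ l} ∪
  {v | ∃ k : Fin n, v = ε₁ + δ k ∨ v = -ε₁ - δ k} ∪
  {v | ∃ k l : Fin n, k ≠ l ∧ v = δ k + δ l} ∪
  {v | ∃ k : Fin n, v = (2 : ℝ) • δ k} ∪
  {v | ∃ k : Fin n, v = -ε₁ + δ k}

/-- The action of an element of the Weyl group `W` of `sp(2n)`: it fixes `ε₁` and
maps `δ_k ↦ ±δ_{τ(k)}`. -/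
def act (τ : Equiv.Perm (Fin n)) (t : Fin n → ℝ) : V n → V n :=
  fun v => Sum.elim (fun i => v (Sum.inl i)) (fun k => t k * v (Sum.inr (τ.symm k)))

/-- The four representative parabolic subsets. -/
noncomputable def reps (n : ℕ) : Set (Set (V n)) :=
  {P0 n, -P0 n, Pn n, Pnbar n}

end Osp2

namespace Osp2

variable {n : ℕ}

@[simp] lemma eps_inl (i : Fin 1) : (ε₁ : V n) (Sum.inl i) = 1 := by
  rw [Subsingleton.elim i 0]; simp [ε₁]

@[simp] lemma eps_inr (k : Fin n) : (ε₁ : V n) (Sum.inr k) = 0 := by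
  simp [ε₁, Pi.single_apply]

@[simp] lemma delta_inl (k : Fin n) (i : Fin 1) : (δ k : V n) (Sum.inl i) = 0 := by
  simp [δ, Pi.single_apply]

@[simp] lemma delta_inr (k l : Fin n) : (δ k : V n) (Sum.inr l) = if l = k then 1 else 0 := by
  simp [δ, Pi.single_apply]

/-- membership lemmas for `Δroot` -/
lemma mem1 {k l : Fin n} (h : k ≠ l) : δ k + δ l ∈ Δroot n :=
  Or.inl (Or.inl ⟨k, l, h, Or.inl rfl⟩)
lemma mem2 {k l : Fin n} (h : k ≠ l) : δ k - δ l ∈ Δroot n :=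
  Or.inl (Or.inl ⟨k, l, h, Or.inr (Or.inl rfl)⟩)
lemma mem3 {k l : Fin n} (h : k ≠ l) : -δ k + δ l ∈ Δroot n :=
  Or.inl (Or.inl ⟨k, l, h, Or.inr (Or.inr (Or.inl rfl))⟩)
lemma mem4 {k l : Fin n} (h : k ≠ l) : -δ k - δ l ∈ Δroot n :=
  Or.inl (Or.inl ⟨k, l, h, Or.inr (Or.inr (Or.inr rfl))⟩)
lemma mem5 (k : Fin n) : (2 : ℝ) • δ k ∈ Δroot n :=
  Or.inl (Or.inr ⟨k, Or.inl rfl⟩)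
lemma mem6 (k : Fin n) : -((2 : ℝ) • δ k) ∈ Δroot n :=
  Or.inl (Or.inr ⟨k, Or.inr rfl⟩)
lemma mem7 (k : Fin n) : ε₁ + δ k ∈ Δroot n :=
  Or.inr ⟨k, Or.inl rfl⟩
lemma mem8 (k : Fin n) : ε₁ - δ k ∈ Δroot n :=
  Or.inr ⟨k, Or.inr (Or.inl rfl)⟩
lemma mem9 (k : Fin n) : -ε₁ + δ k ∈ Δroot n :=
  Or.inr ⟨k, Or.inr (Or.inr (Or.inl rfl))⟩
lemma mem10 (k : Fin n) : -ε₁ - δ k ∈ Δroot n :=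
  Or.inr ⟨k, Or.inr (Or.inr (Or.inr rfl))⟩

lemma neg_mem {v : V n} (hv : v ∈ Δroot n) : -v ∈ Δroot n := by
  rcases hv with (⟨k, l, hkl, h | h | h | h⟩ | ⟨k, h | h⟩) | ⟨k, h | h | h | h⟩ <;> subst h
  · exact Or.inl (Or.inl ⟨k, l, hkl, Or.inr (Or.inr (Or.inr (by module)))⟩)
  · exact Or.inl (Or.inl ⟨k, l, hkl, Or.inr (Or.inr (Or.inl (by module)))⟩)
  · exact Or.inl (Or.inl ⟨k, l, hkl, Or.inr (Or.inl (by module))⟩)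
  · exact Or.inl (Or.inl ⟨k, l, hkl, Or.inl (by module)⟩)
  · exact Or.inl (Or.inr ⟨k, Or.inr rfl⟩)
  · exact Or.inl (Or.inr ⟨k, Or.inl (by module)⟩)
  · exact Or.inr ⟨k, Or.inr (Or.inr (Or.inr (by module)))⟩
  · exact Or.inr ⟨k, Or.inr (Or.inr (Or.inl (by module)))⟩
  · exact Or.inr ⟨k, Or.inr (Or.inl (by module))⟩
  · exact Or.inr ⟨k, Or.inl (by module)⟩

end Osp2
namespace Osp2

variable {n : ℕ}

noncomputable def e0 : V n →ₗ[ℝ] ℝ := LinearMap.proj (Sum.inl 0)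

noncomputable def gg : V n →ₗ[ℝ] ℝ := ∑ k : Fin n, LinearMap.proj (Sum.inr k)

@[simp] lemma e0_eps : (e0 : V n →ₗ[ℝ] ℝ) ε₁ = 1 := by simp [e0]

@[simp] lemma e0_delta (k : Fin n) : (e0 : V n →ₗ[ℝ] ℝ) (δ k) = 0 := by simp [e0]

@[simp] lemma gg_eps : (gg : V n →ₗ[ℝ] ℝ) ε₁ = 0 := by
  simp [gg, LinearMap.sum_apply]

@[simp] lemma gg_delta (k : Fin n) : (gg : V n →ₗ[ℝ] ℝ) (δ k) = 1 := by
  simp [gg, LinearMap.sum_apply, Finset.sum_ite_eq]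

lemma halfspace_comin (f : V n →ₗ[ℝ] ℝ) (c : ℝ) (hc : 0 < c)
    (hval : ∀ v ∈ Δroot n, f v = 0 ∨ f v = c ∨ f v = -c)
    (hproper : ∃ v ∈ Δroot n, f v < 0) :
    IsCominuscule (Δroot n) {v ∈ Δroot n | 0 ≤ f v} := by
  constructor
  · refine ⟨⟨fun v hv => hv.1, ?_⟩, ?_, ?_⟩
    · intro hsub
      obtain ⟨v, hv, hfv⟩ := hproper
      exact absurd (hsub hv).2 (by linarith)
    · ext v
      constructor
      · intro hv
        by_cases h : 0 ≤ f v
        · exact Or.inl ⟨hv, h⟩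
        · refine Or.inr ?_
          rw [Set.mem_neg]
          exact ⟨neg_mem hv, by rw [map_neg]; linarith⟩
      · rintro (hv | hv)
        · exact hv.1
        · rw [Set.mem_neg] at hv
          have := neg_mem hv.1
          rwa [neg_neg] at this
    · intro α hα β hβ hs
      exact ⟨hs, by rw [map_add]; have := hα.2; have := hβ.2; linarith⟩
  · rintro α ⟨hα, hα'⟩ β ⟨hβ, hβ'⟩ hs
    rw [Set.mem_neg] at hα' hβ'
    have h1 : f α = c := by
      rcases hval α hα.1 with h | h | h
      · exact absurd ⟨neg_mem hα.1, by rw [map_neg]; linarith [hα.2]⟩ hα'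
      · exact h
      · linarith [hα.2]
    have h2 : f β = c := by
      rcases hval β hβ.1 with h | h | h
      · exact absurd ⟨neg_mem hβ.1, by rw [map_neg]; linarith [hβ.2]⟩ hβ'
      · exact h
      · linarith [hβ.2]
    rcases hval _ hs with h | h | h <;> rw [map_add, h1, h2] at h <;> linarith

end Osp2
namespace Osp2

variable {n : ℕ}

noncomputable def fplus : V n →ₗ[ℝ] ℝ := e0 + gg
noncomputable def fminus : V n →ₗ[ℝ] ℝ := gg - e0

@[simp] lemma fplus_eps : (fplus : V n →ₗ[ℝ] ℝ) ε₁ = 1 := by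
  simp [fplus, LinearMap.add_apply]
@[simp] lemma fplus_delta (k : Fin n) : (fplus : V n →ₗ[ℝ] ℝ) (δ k) = 1 := by
  simp [fplus, LinearMap.add_apply]
@[simp] lemma fminus_eps : (fminus : V n →ₗ[ℝ] ℝ) ε₁ = -1 := by
  simp [fminus, LinearMap.sub_apply]
@[simp] lemma fminus_delta (k : Fin n) : (fminus : V n →ₗ[ℝ] ℝ) (δ k) = 1 := by
  simp [fminus, LinearMap.sub_apply]

lemma P0_eq : P0 n = {v ∈ Δroot n | 0 ≤ e0 v} := by
  ext v
  constructor
  · rintro ((⟨k, l, hkl, h | h | h | h⟩ | ⟨k, h | h⟩) | ⟨k, h | h⟩) <;> subst h <;>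
      refine ⟨?_, by simp⟩
    exacts [mem1 hkl, mem2 hkl, mem3 hkl, mem4 hkl, mem5 k, mem6 k, mem7 k, mem8 k]
  · rintro ⟨(⟨k, l, hkl, h | h | h | h⟩ | ⟨k, h | h⟩) | ⟨k, h | h | h | h⟩, hf⟩ <;> subst h
    · exact Or.inl (Or.inl ⟨k, l, hkl, Or.inl rfl⟩)
    · exact Or.inl (Or.inl ⟨k, l, hkl, Or.inr (Or.inl rfl)⟩)
    · exact Or.inl (Or.inl ⟨k, l, hkl, Or.inr (Or.inr (Or.inl rfl))⟩)
    · exact Or.inl (Or.inl ⟨k, l, hkl, Or.inr (Or.inr (Or.inr rfl))⟩)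
    · exact Or.inl (Or.inr ⟨k, Or.inl rfl⟩)
    · exact Or.inl (Or.inr ⟨k, Or.inr rfl⟩)
    · exact Or.inr ⟨k, Or.inl rfl⟩
    · exact Or.inr ⟨k, Or.inr rfl⟩
    · exfalso; norm_num at hf
    · exfalso; norm_num at hf

lemma negP0_eq : -P0 n = {v ∈ Δroot n | e0 v ≤ 0} := by
  ext v
  rw [Set.mem_neg, P0_eq]
  constructor
  · rintro ⟨hv, hf⟩
    have h2 := neg_mem hv
    rw [neg_neg] at h2
    rw [map_neg] at hf
    exact ⟨h2, by linarith⟩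
  · rintro ⟨hv, hf⟩
    exact ⟨neg_mem hv, by rw [map_neg]; linarith⟩

lemma Pn_eq : Pn n = {v ∈ Δroot n | 0 ≤ fplus v} := by
  ext v
  constructor
  · rintro ((((⟨k, l, hkl, h⟩ | ⟨k, h | h⟩) | ⟨k, l, hkl, h⟩) | ⟨k, h⟩) | ⟨k, h⟩) <;> subst h
    · exact ⟨mem2 hkl, by simp⟩
    · exact ⟨mem8 k, by simp⟩
    · refine ⟨?_, by simp⟩
      have heq : δ k - ε₁ = -ε₁ + δ k := by module
      rw [heq]; exact mem9 k
    · exact ⟨mem1 hkl, by norm_num⟩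
    · exact ⟨mem5 k, by norm_num⟩
    · exact ⟨mem7 k, by norm_num⟩
  · rintro ⟨(⟨k, l, hkl, h | h | h | h⟩ | ⟨k, h | h⟩) | ⟨k, h | h | h | h⟩, hf⟩ <;> subst h
    · exact Or.inl (Or.inl (Or.inr ⟨k, l, hkl, rfl⟩))
    · exact Or.inl (Or.inl (Or.inl (Or.inl ⟨k, l, hkl, rfl⟩)))
    · exact Or.inl (Or.inl (Or.inl (Or.inl ⟨l, k, hkl.symm, by module⟩)))
    · exfalso; norm_num at hf
    · exact Or.inl (Or.inr ⟨k, rfl⟩)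
    · exfalso; norm_num at hf
    · exact Or.inr ⟨k, rfl⟩
    · exact Or.inl (Or.inl (Or.inl (Or.inr ⟨k, Or.inl rfl⟩)))
    · exact Or.inl (Or.inl (Or.inl (Or.inr ⟨k, Or.inr (by module)⟩)))
    · exfalso; norm_num at hf

lemma Pnbar_eq : Pnbar n = {v ∈ Δroot n | 0 ≤ fminus v} := by
  ext v
  constructor
  · rintro ((((⟨k, l, hkl, h⟩ | ⟨k, h | h⟩) | ⟨k, l, hkl, h⟩) | ⟨k, h⟩) | ⟨k, h⟩) <;> subst h
    · exact ⟨mem2 hkl, by simp⟩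
    · exact ⟨mem7 k, by simp⟩
    · exact ⟨mem10 k, by simp⟩
    · exact ⟨mem1 hkl, by norm_num⟩
    · exact ⟨mem5 k, by norm_num⟩
    · exact ⟨mem9 k, by norm_num⟩
  · rintro ⟨(⟨k, l, hkl, h | h | h | h⟩ | ⟨k, h | h⟩) | ⟨k, h | h | h | h⟩, hf⟩ <;> subst h
    · exact Or.inl (Or.inl (Or.inr ⟨k, l, hkl, rfl⟩))
    · exact Or.inl (Or.inl (Or.inl (Or.inl ⟨k, l, hkl, rfl⟩)))
    · exact Or.inl (Or.inl (Or.inl (Or.inl ⟨l, k, hkl.symm, by module⟩)))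
    · exfalso; norm_num at hf
    · exact Or.inl (Or.inr ⟨k, rfl⟩)
    · exfalso; norm_num at hf
    · exact Or.inl (Or.inl (Or.inl (Or.inr ⟨k, Or.inl rfl⟩)))
    · exfalso; norm_num at hf
    · exact Or.inr ⟨k, rfl⟩
    · exact Or.inl (Or.inl (Or.inl (Or.inr ⟨k, Or.inr rfl⟩)))

end Osp2
namespace Osp2

variable {n : ℕ} {τ : Equiv.Perm (Fin n)} {t : Fin n → ℝ}

@[simp] lemma act_inl (v : V n) (i : Fin 1) : act τ t v (Sum.inl i) = v (Sum.inl i) := rfl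

@[simp] lemma act_inr (v : V n) (k : Fin n) :
    act τ t v (Sum.inr k) = t k * v (Sum.inr (τ.symm k)) := rfl

lemma act_add (v w : V n) : act τ t (v + w) = act τ t v + act τ t w := by
  funext i; cases i <;> simp [mul_add]

lemma act_neg (v : V n) : act τ t (-v) = -(act τ t v) := by
  funext i; cases i <;> simp

lemma act_smul (c : ℝ) (v : V n) : act τ t (c • v) = c • act τ t v := by
  funext i; cases i <;> simp <;> ring

lemma act_eps : act τ t (ε₁ : V n) = ε₁ := by
  funext i; cases i <;> simp

lemma act_delta (j : Fin n) : act τ t (δ j) = t (τ j) • δ (τ j) := by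
  funext i; cases i with
  | inl i => simp
  | inr k =>
    simp only [act_inr, delta_inr, Pi.smul_apply, smul_eq_mul]
    by_cases h : k = τ j
    · subst h; simp
    · have h2 : ¬ τ.symm k = j := fun hc => h (by rw [← hc]; simp)
      simp [h, h2]

lemma neg_pm {s : ℝ} (h : s = 1 ∨ s = -1) : -s = 1 ∨ -s = -1 := by
  rcases h with h | h <;> subst h <;> [right; left] <;> norm_num

lemma memA {k l : Fin n} (s s' : ℝ) (hs : s = 1 ∨ s = -1) (hs' : s' = 1 ∨ s' = -1)
    (h : k ≠ l) : s • δ k + s' • δ l ∈ Δroot n := by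
  rcases hs with rfl | rfl <;> rcases hs' with rfl | rfl
  · have : (1:ℝ) • δ k + (1:ℝ) • δ l = δ k + δ l := by module
    rw [this]; exact mem1 h
  · have : (1:ℝ) • δ k + (-1:ℝ) • δ l = δ k - δ l := by module
    rw [this]; exact mem2 h
  · have : (-1:ℝ) • δ k + (1:ℝ) • δ l = -δ k + δ l := by module
    rw [this]; exact mem3 h
  · have : (-1:ℝ) • δ k + (-1:ℝ) • δ l = -δ k - δ l := by module
    rw [this]; exact mem4 h

lemma memB {k : Fin n} (s : ℝ) (hs : s = 1 ∨ s = -1) : s • ((2:ℝ) • δ k) ∈ Δroot n := by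
  rcases hs with rfl | rfl
  · have : (1:ℝ) • ((2:ℝ) • δ k) = (2:ℝ) • δ k := by module
    rw [this]; exact mem5 k
  · have : (-1:ℝ) • ((2:ℝ) • δ k) = -((2:ℝ) • δ k) := by module
    rw [this]; exact mem6 k

lemma memC1 {k : Fin n} (s : ℝ) (hs : s = 1 ∨ s = -1) : ε₁ + s • δ k ∈ Δroot n := by
  rcases hs with rfl | rfl
  · have : ε₁ + (1:ℝ) • δ k = ε₁ + δ k := by module
    rw [this]; exact mem7 k
  · have : ε₁ + (-1:ℝ) • δ k = ε₁ - δ k := by module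
    rw [this]; exact mem8 k

lemma memC2 {k : Fin n} (s : ℝ) (hs : s = 1 ∨ s = -1) : -ε₁ + s • δ k ∈ Δroot n := by
  rcases hs with rfl | rfl
  · have : -ε₁ + (1:ℝ) • δ k = -ε₁ + δ k := by module
    rw [this]; exact mem9 k
  · have : -ε₁ + (-1:ℝ) • δ k = -ε₁ - δ k := by module
    rw [this]; exact mem10 k

lemma act_mem (ht : ∀ k, t k = 1 ∨ t k = -1) {v : V n} (hv : v ∈ Δroot n) :
    act τ t v ∈ Δroot n := by
  have hinj : ∀ k l : Fin n, k ≠ l → τ k ≠ τ l := fun k l h hc => h (τ.injective hc)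
  rcases hv with (⟨k, l, hkl, h | h | h | h⟩ | ⟨k, h | h⟩) | ⟨k, h | h | h | h⟩ <;> subst h
  · rw [act_add, act_delta, act_delta]
    exact memA _ _ (ht _) (ht _) (hinj _ _ hkl)
  · rw [sub_eq_add_neg, act_add, act_neg, act_delta, act_delta, ← neg_smul]
    exact memA _ _ (ht _) (neg_pm (ht _)) (hinj _ _ hkl)
  · rw [act_add, act_neg, act_delta, act_delta, ← neg_smul]
    exact memA _ _ (neg_pm (ht _)) (ht _) (hinj _ _ hkl)
  · rw [sub_eq_add_neg, act_add, act_neg, act_neg, act_delta, act_delta, ← neg_smul, ← neg_smul]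
    exact memA _ _ (neg_pm (ht _)) (neg_pm (ht _)) (hinj _ _ hkl)
  · rw [act_smul, act_delta, smul_comm]
    exact memB _ (ht _)
  · rw [act_neg, act_smul, act_delta, smul_comm, ← neg_smul]
    exact memB _ (neg_pm (ht _))
  · rw [act_add, act_eps, act_delta]
    exact memC1 _ (ht _)
  · rw [sub_eq_add_neg, act_add, act_eps, act_neg, act_delta, ← neg_smul]
    exact memC1 _ (neg_pm (ht _))
  · rw [act_add, act_neg, act_eps, act_delta]
    exact memC2 _ (ht _)
  · rw [sub_eq_add_neg, act_add, act_neg, act_neg, act_eps, act_delta, ← neg_smul]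
    exact memC2 _ (neg_pm (ht _))

lemma sq_pm {c : ℝ} (hc : c = 1 ∨ c = -1) (x : ℝ) : c * (c * x) = x := by
  rcases hc with rfl | rfl <;> ring

lemma act_linv (ht : ∀ k, t k = 1 ∨ t k = -1) (v : V n) :
    act τ.symm (t ∘ τ) (act τ t v) = v := by
  funext i; cases i with
  | inl i => rfl
  | inr k =>
    simp only [act_inr, Equiv.symm_symm, Function.comp_apply, Equiv.apply_symm_apply,
      Equiv.symm_apply_apply]
    exact sq_pm (ht _) _

lemma act_rinv (ht : ∀ k, t k = 1 ∨ t k = -1) (v : V n) :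
    act τ t (act τ.symm (t ∘ τ) v) = v := by
  funext i; cases i with
  | inl i => rfl
  | inr k =>
    simp only [act_inr, Equiv.symm_symm, Function.comp_apply, Equiv.apply_symm_apply,
      Equiv.symm_apply_apply]
    exact sq_pm (ht _) _

lemma act_inj (ht : ∀ k, t k = 1 ∨ t k = -1) : Function.Injective (act τ t : V n → V n) := by
  intro a b h
  have := congrArg (act τ.symm (t ∘ τ)) h
  rwa [act_linv ht, act_linv ht] at this

lemma act_comin (ht : ∀ k, t k = 1 ∨ t k = -1) {P : Set (V n)}
    (hP : IsCominuscule (Δroot n) P) : IsCominuscule (Δroot n) (act τ t '' P) := by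
  obtain ⟨⟨⟨hsub, hne⟩, hcov, hclose⟩, hcom⟩ := hP
  have htc : ∀ k, (t ∘ τ) k = 1 ∨ (t ∘ τ) k = -1 := fun k => ht (τ k)
  have hpre : ∀ v ∈ Δroot n, ∃ u ∈ Δroot n, act τ t u = v := by
    intro v hv
    exact ⟨act τ.symm (t ∘ τ) v, act_mem htc hv, act_rinv ht v⟩
  have himg : act τ t '' P ⊆ Δroot n := by
    rintro _ ⟨u, hu, rfl⟩; exact act_mem ht (hsub hu)
  have hmemiff : ∀ u : V n, act τ t u ∈ act τ t '' P ↔ u ∈ P := by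
    intro u
    constructor
    · rintro ⟨w, hw, hwe⟩
      rwa [← act_inj ht hwe]
    · intro hu; exact ⟨u, hu, rfl⟩
  have hnegiff : ∀ u : V n, -act τ t u ∈ act τ t '' P ↔ -u ∈ P := by
    intro u; rw [← act_neg]; exact hmemiff _
  constructor
  constructor
  · refine ⟨himg, fun hc => hne ?_⟩
    intro v hv
    obtain ⟨u, hu, rfl⟩ := hpre v hv
    rcases hc (act_mem ht hv) with ⟨w, hw, hwe⟩
    rwa [← act_inj ht hwe]
  · constructor
    · ext v
      constructor
      · intro hv
        obtain ⟨u, hu, rfl⟩ := hpre v hv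
        rcases (hcov ▸ hu : u ∈ P ∪ -P) with h | h
        · exact Or.inl ⟨u, h, rfl⟩
        · rw [Set.mem_neg] at h
          right
          rw [Set.mem_neg, ← act_neg]
          exact ⟨-u, h, rfl⟩
      · rintro (hv | hv)
        · exact himg hv
        · rw [Set.mem_neg] at hv
          have := neg_mem (himg hv)
          rwa [neg_neg] at this
    · rintro α ⟨a, ha, rfl⟩ β ⟨b, hb, rfl⟩ hs
      rw [← act_add] at hs ⊢
      have hab : a + b ∈ Δroot n := by
        have := act_mem (τ := τ.symm) htc hs
        rwa [act_linv ht] at this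
      exact ⟨a + b, hclose a ha b hb hab, rfl⟩
  · rintro α ⟨hα1, hα2⟩ β ⟨hβ1, hβ2⟩ hs
    obtain ⟨a, ha, rfl⟩ := hα1
    obtain ⟨b, hb, rfl⟩ := hβ1
    rw [Set.mem_neg] at hα2 hβ2
    rw [hnegiff] at hα2 hβ2
    rw [← act_add] at hs
    have hab : a + b ∈ Δroot n := by
      have := act_mem (τ := τ.symm) htc hs
      rwa [act_linv ht] at this
    exact hcom a ⟨ha, fun hc => hα2 (Set.mem_neg.mp hc)⟩ b ⟨hb, fun hc => hβ2 (Set.mem_neg.mp hc)⟩ hab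

end Osp2
namespace Osp2

variable {n : ℕ}

lemma e0_val : ∀ v ∈ Δroot n, e0 v = 0 ∨ e0 v = 1 ∨ e0 v = -1 := by
  rintro v ((⟨k, l, hkl, h | h | h | h⟩ | ⟨k, h | h⟩) | ⟨k, h | h | h | h⟩) <;> subst h <;>
    simp <;> norm_num

lemma fplus_val : ∀ v ∈ Δroot n, fplus v = 0 ∨ fplus v = 2 ∨ fplus v = -2 := by
  rintro v ((⟨k, l, hkl, h | h | h | h⟩ | ⟨k, h | h⟩) | ⟨k, h | h | h | h⟩) <;> subst h <;>
    simp <;> norm_num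

lemma fminus_val : ∀ v ∈ Δroot n, fminus v = 0 ∨ fminus v = 2 ∨ fminus v = -2 := by
  rintro v ((⟨k, l, hkl, h | h | h | h⟩ | ⟨k, h | h⟩) | ⟨k, h | h | h | h⟩) <;> subst h <;>
    simp <;> norm_num

lemma reps_comin (hn : 1 ≤ n) : ∀ Q ∈ reps n, IsCominuscule (Δroot n) Q := by
  set k0 : Fin n := ⟨0, hn⟩
  intro Q hQ
  simp only [reps, Set.mem_insert_iff, Set.mem_singleton_iff] at hQ
  rcases hQ with rfl | rfl | rfl | rfl
  · rw [P0_eq]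
    exact halfspace_comin e0 1 one_pos e0_val ⟨-ε₁ - δ k0, mem10 k0, by simp⟩
  · have heq : -P0 n = {v ∈ Δroot n | 0 ≤ (-e0 : V n →ₗ[ℝ] ℝ) v} := by
      rw [negP0_eq]; ext v; simp [LinearMap.neg_apply, neg_nonneg]
    rw [heq]
    refine halfspace_comin (-e0) 1 one_pos ?_ ⟨ε₁ + δ k0, mem7 k0, ?_⟩
    · intro v hv
      rcases e0_val v hv with h | h | h <;> simp [LinearMap.neg_apply, h] <;> norm_num
    · simp [LinearMap.neg_apply]
  · rw [Pn_eq]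
    exact halfspace_comin fplus 2 two_pos fplus_val
      ⟨-((2:ℝ) • δ k0), mem6 k0, by simp⟩
  · rw [Pnbar_eq]
    exact halfspace_comin fminus 2 two_pos fminus_val
      ⟨-((2:ℝ) • δ k0), mem6 k0, by simp⟩

end Osp2
namespace Osp2

variable {n : ℕ} {τ : Equiv.Perm (Fin n)} {t : Fin n → ℝ}

lemma e0_apply (v : V n) : e0 v = v (Sum.inl 0) := rfl

lemma coord_iff {Q Q' : Set (V n)} (h : act τ t '' Q = Q') (c : ℝ) :
    (∃ v ∈ Q, v (Sum.inl 0) = c) ↔ (∃ v ∈ Q', v (Sum.inl 0) = c) := by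
  subst h
  constructor
  · rintro ⟨v, hv, hc⟩
    exact ⟨act τ t v, ⟨v, hv, rfl⟩, hc⟩
  · rintro ⟨v, ⟨u, hu, rfl⟩, hc⟩
    exact ⟨u, hu, hc⟩

lemma invI_iff {Q Q' : Set (V n)} (ht : ∀ k, t k = 1 ∨ t k = -1)
    (h : act τ t '' Q = Q') :
    (∃ v ∈ Q, v (Sum.inl 0) = -1 ∧ -v ∉ Q) ↔ (∃ v ∈ Q', v (Sum.inl 0) = -1 ∧ -v ∉ Q') := by
  subst h
  constructor
  · rintro ⟨v, hv, hc, hnv⟩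
    refine ⟨act τ t v, ⟨v, hv, rfl⟩, hc, ?_⟩
    rintro ⟨u, hu, hue⟩
    rw [← act_neg] at hue
    exact hnv (act_inj ht hue ▸ hu)
  · rintro ⟨v, ⟨u, hu, rfl⟩, hc, hnv⟩
    refine ⟨u, hu, hc, fun hcon => hnv ?_⟩
    rw [← act_neg]
    exact ⟨-u, hcon, rfl⟩

lemma coord_neg1 {v : V n} (hv : v ∈ Δroot n) (hc : v (Sum.inl 0) = -1) :
    ∃ k, v = -ε₁ + δ k ∨ v = -ε₁ - δ k := by
  rcases hv with (⟨k, l, hkl, h | h | h | h⟩ | ⟨k, h | h⟩) | ⟨k, h | h | h | h⟩ <;> subst h <;>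
    [skip; skip; skip; skip; skip; skip; skip; skip; exact ⟨k, Or.inl rfl⟩;
     exact ⟨k, Or.inr rfl⟩] <;> exfalso <;> simp at hc <;> norm_num at hc

section values

lemma hA_P0 (hn : 1 ≤ n) : ∃ v ∈ P0 n, v (Sum.inl 0) = 1 :=
  ⟨ε₁ + δ ⟨0, hn⟩, Or.inr ⟨_, Or.inl rfl⟩, by simp⟩

lemma hA_Pn (hn : 1 ≤ n) : ∃ v ∈ Pn n, v (Sum.inl 0) = 1 :=
  ⟨ε₁ + δ ⟨0, hn⟩, Or.inr ⟨_, rfl⟩, by simp⟩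

lemma hA_Pnbar (hn : 1 ≤ n) : ∃ v ∈ Pnbar n, v (Sum.inl 0) = 1 :=
  ⟨ε₁ + δ ⟨0, hn⟩, Or.inl (Or.inl (Or.inl (Or.inr ⟨_, Or.inl rfl⟩))), by simp⟩

lemma hnA_negP0 : ¬ ∃ v ∈ -P0 n, v (Sum.inl 0) = 1 := by
  rintro ⟨v, hv, hc⟩
  rw [negP0_eq] at hv
  obtain ⟨-, h2⟩ := hv
  rw [e0_apply, hc] at h2
  linarith

lemma hB_Pn (hn : 1 ≤ n) : ∃ v ∈ Pn n, v (Sum.inl 0) = -1 := by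
  refine ⟨δ ⟨0, hn⟩ - ε₁, Or.inl (Or.inl (Or.inl (Or.inr ⟨_, Or.inr rfl⟩))), by simp⟩

lemma hB_Pnbar (hn : 1 ≤ n) : ∃ v ∈ Pnbar n, v (Sum.inl 0) = -1 :=
  ⟨-ε₁ + δ ⟨0, hn⟩, Or.inr ⟨_, rfl⟩, by simp⟩

lemma hnB_P0 : ¬ ∃ v ∈ P0 n, v (Sum.inl 0) = -1 := by
  rintro ⟨v, hv, hc⟩
  rw [P0_eq] at hv
  obtain ⟨-, h2⟩ := hv
  rw [e0_apply, hc] at h2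
  linarith

lemma hI_negP0 (hn : 1 ≤ n) : ∃ v ∈ -P0 n, v (Sum.inl 0) = -1 ∧ -v ∉ -P0 n := by
  refine ⟨-ε₁ - δ ⟨0, hn⟩, ?_, by simp, ?_⟩
  · rw [negP0_eq]
    exact ⟨mem10 _, by rw [e0_apply]; simp⟩
  · rw [negP0_eq]
    rintro ⟨-, hf⟩
    rw [e0_apply] at hf
    simp at hf
    linarith

lemma hI_Pnbar (hn : 1 ≤ n) : ∃ v ∈ Pnbar n, v (Sum.inl 0) = -1 ∧ -v ∉ Pnbar n := by
  refine ⟨-ε₁ + δ ⟨0, hn⟩, Or.inr ⟨_, rfl⟩, by simp, ?_⟩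
  rw [Pnbar_eq]
  rintro ⟨-, hf⟩
  simp at hf
  linarith

lemma hnI_Pn : ¬ ∃ v ∈ Pn n, v (Sum.inl 0) = -1 ∧ -v ∉ Pn n := by
  rintro ⟨v, hv, hc, hnv⟩
  rw [Pn_eq] at hv
  obtain ⟨k, rfl | rfl⟩ := coord_neg1 hv.1 hc
  · refine hnv ?_
    have : -(-ε₁ + δ k) = ε₁ - δ k := by module
    rw [this]
    exact Or.inl (Or.inl (Or.inl (Or.inr ⟨k, Or.inl rfl⟩)))
  · have := hv.2
    simp at this
    linarith

end values

lemma reps_not_equiv (hn : 1 ≤ n) : ∀ Q ∈ reps n, ∀ Q' ∈ reps n, Q ≠ Q' →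
    ¬ ∃ (τ : Equiv.Perm (Fin n)) (t : Fin n → ℝ), (∀ k, t k = 1 ∨ t k = -1) ∧
      act τ t '' Q = Q' := by
  intro Q hQ Q' hQ' hne hex
  obtain ⟨τ, t, ht, h⟩ := hex
  simp only [reps, Set.mem_insert_iff, Set.mem_singleton_iff] at hQ hQ'
  rcases hQ with rfl | rfl | rfl | rfl <;> rcases hQ' with rfl | rfl | rfl | rfl
  · exact hne rfl
  · exact hnA_negP0 ((coord_iff h 1).mp (hA_P0 hn))
  · exact hnB_P0 ((coord_iff h (-1)).mpr (hB_Pn hn))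
  · exact hnB_P0 ((coord_iff h (-1)).mpr (hB_Pnbar hn))
  · exact hnA_negP0 ((coord_iff h 1).mpr (hA_P0 hn))
  · exact hne rfl
  · exact hnA_negP0 ((coord_iff h 1).mpr (hA_Pn hn))
  · exact hnA_negP0 ((coord_iff h 1).mpr (hA_Pnbar hn))
  · exact hnB_P0 ((coord_iff h (-1)).mp (hB_Pn hn))
  · exact hnA_negP0 ((coord_iff h 1).mp (hA_Pn hn))
  · exact hne rfl
  · exact hnI_Pn ((invI_iff ht h).mpr (hI_Pnbar hn))
  · exact hnB_P0 ((coord_iff h (-1)).mp (hB_Pnbar hn))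
  · exact hnA_negP0 ((coord_iff h 1).mp (hA_Pnbar hn))
  · exact hnI_Pn ((invI_iff ht h).mp (hI_Pnbar hn))
  · exact hne rfl

end Osp2
namespace Osp2

variable {n : ℕ}

lemma classify (hn : 1 ≤ n) (P : Set (V n)) (hc : IsCominuscule (Δroot n) P)
    (hnorm : ∀ k, (2:ℝ) • δ k ∈ P) :
    P = P0 n ∨ P = -P0 n ∨ P = Pn n ∨ P = Pnbar n := by
  obtain ⟨⟨⟨hsub, hne⟩, hcov, hcl⟩, hcom⟩ := hc
  have htot : ∀ v ∈ Δroot n, v ∈ P ∨ -v ∈ P := by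
    intro v hv
    rcases (hcov ▸ hv : v ∈ P ∪ -P) with h | h
    · exact Or.inl h
    · exact Or.inr (Set.mem_neg.mp h)
  have addP : ∀ a ∈ P, ∀ b ∈ P, ∀ c ∈ Δroot n, a + b = c → c ∈ P := by
    intro a ha b hb c hcΔ he
    have h1 : a + b ∈ Δroot n := he ▸ hcΔ
    have h2 := hcl a ha b hb h1
    rwa [he] at h2
  have ncom : ∀ a ∈ P, -a ∉ P → ∀ b ∈ P, -b ∉ P → ∀ c ∈ Δroot n, a + b = c → False := by
    intro a ha hna b hb hnb c hcΔ he
    exact hcom a ⟨ha, fun h => hna (Set.mem_neg.mp h)⟩ b ⟨hb, fun h => hnb (Set.mem_neg.mp h)⟩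
      (he ▸ hcΔ)
  have hsum2 : ∀ k l, k ≠ l → δ k + δ l ∈ P := by
    intro k l hkl
    rcases htot (δ k - δ l) (mem2 hkl) with h | h
    · exact addP _ h _ (hnorm l) _ (mem1 hkl) (by module)
    · exact addP _ h _ (hnorm k) _ (mem1 hkl) (by module)
  set k0 : Fin n := ⟨0, hn⟩ with hk0
  by_cases hI : ∀ k, -((2:ℝ) • δ k) ∈ P
  · -- Case I : all of the sp(2n) roots lie in P
    have h2 : ∀ k l, k ≠ l → δ k - δ l ∈ P := by
      intro k l hkl
      exact addP _ (hsum2 k l hkl) _ (hI l) _ (mem2 hkl) (by module)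
    have h3 : ∀ k l, k ≠ l → -δ k + δ l ∈ P := by
      intro k l hkl
      have e : -δ k + δ l = δ l - δ k := by module
      rw [e]; exact h2 l k hkl.symm
    have h4 : ∀ k l, k ≠ l → -δ k - δ l ∈ P := by
      intro k l hkl
      exact addP _ (hI k) _ (h2 k l hkl) _ (mem4 hkl) (by module)
    have hplusflip : ∀ k, ε₁ + δ k ∈ P → ε₁ - δ k ∈ P := fun k h =>
      addP _ h _ (hI k) _ (mem8 k) (by module)
    have hminusflip : ∀ k, ε₁ - δ k ∈ P → ε₁ + δ k ∈ P := fun k h =>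
      addP _ h _ (hnorm k) _ (mem7 k) (by module)
    have hmove : ∀ k l, k ≠ l → ε₁ + δ k ∈ P → ε₁ + δ l ∈ P := by
      intro k l hkl h
      exact addP _ h _ (h3 k l hkl) _ (mem7 l) (by module)
    have hnplusflip : ∀ k, -ε₁ - δ k ∈ P → -ε₁ + δ k ∈ P := fun k h =>
      addP _ h _ (hnorm k) _ (mem9 k) (by module)
    have hnminusflip : ∀ k, -ε₁ + δ k ∈ P → -ε₁ - δ k ∈ P := fun k h =>
      addP _ h _ (hI k) _ (mem10 k) (by module)
    have hnmove : ∀ k l, k ≠ l → -ε₁ - δ k ∈ P → -ε₁ - δ l ∈ P := by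
      intro k l hkl h
      exact addP _ h _ (h2 k l hkl) _ (mem10 l) (by module)
    by_cases hp : ε₁ + δ k0 ∈ P
    · -- P = P0
      have hallplus : ∀ l, ε₁ + δ l ∈ P := by
        intro l
        by_cases hl : k0 = l
        · exact hl ▸ hp
        · exact hmove k0 l hl hp
      have hallminus : ∀ l, ε₁ - δ l ∈ P := fun l => hplusflip l (hallplus l)
      have hfull : (∃ k, -ε₁ + δ k ∈ P ∨ -ε₁ - δ k ∈ P) → False := by
        rintro ⟨k, hk⟩
        have hm : -ε₁ - δ k ∈ P := by
          rcases hk with hk | hk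
          · exact hnminusflip k hk
          · exact hk
        have hallneg : ∀ l, -ε₁ - δ l ∈ P := by
          intro l
          by_cases hl : k = l
          · exact hl ▸ hm
          · exact hnmove k l hl hm
        have hallneg' : ∀ l, -ε₁ + δ l ∈ P := fun l => hnplusflip l (hallneg l)
        refine hne ?_
        rintro v ((⟨k', l', hkl', h | h | h | h⟩ | ⟨k', h | h⟩) | ⟨k', h | h | h | h⟩) <;> subst h
        · exact hsum2 k' l' hkl'
        · exact h2 k' l' hkl'
        · exact h3 k' l' hkl'
        · exact h4 k' l' hkl'
        · exact hnorm k'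
        · exact hI k'
        · exact hallplus k'
        · exact hallminus k'
        · exact hallneg' k'
        · exact hallneg k'
      left
      rw [P0_eq]
      ext v
      constructor
      · intro hv
        refine ⟨hsub hv, ?_⟩
        rcases hsub hv with (⟨k', l', hkl', h | h | h | h⟩ | ⟨k', h | h⟩) | ⟨k', h | h | h | h⟩ <;>
          subst h
        · simp
        · simp
        · simp
        · simp
        · simp
        · simp
        · simp
        · simp
        · exact (hfull ⟨k', Or.inl hv⟩).elim
        · exact (hfull ⟨k', Or.inr hv⟩).elim
      · rintro ⟨hv, hf⟩
        rcases hv with (⟨k', l', hkl', h | h | h | h⟩ | ⟨k', h | h⟩) | ⟨k', h | h | h | h⟩ <;>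
          subst h
        · exact hsum2 k' l' hkl'
        · exact h2 k' l' hkl'
        · exact h3 k' l' hkl'
        · exact h4 k' l' hkl'
        · exact hnorm k'
        · exact hI k'
        · exact hallplus k'
        · exact hallminus k'
        · exfalso; rw [e0_apply] at hf; simp at hf; linarith
        · exfalso; rw [e0_apply] at hf; simp at hf; linarith
    · -- P = -P0
      have hm0 : -ε₁ - δ k0 ∈ P := by
        rcases htot _ (mem7 k0) with h | h
        · exact absurd h hp
        · have e : -(ε₁ + δ k0) = -ε₁ - δ k0 := by module
          rwa [e] at h
      have hallneg : ∀ l, -ε₁ - δ l ∈ P := by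
        intro l
        by_cases hl : k0 = l
        · exact hl ▸ hm0
        · exact hnmove k0 l hl hm0
      have hallneg' : ∀ l, -ε₁ + δ l ∈ P := fun l => hnplusflip l (hallneg l)
      have hnopos : ∀ k, ε₁ + δ k ∉ P ∧ ε₁ - δ k ∉ P := by
        intro k
        constructor
        · intro hk
          refine hp ?_
          by_cases hl : k = k0
          · exact hl ▸ hk
          · exact hmove k k0 hl hk
        · intro hk
          refine hp ?_
          have := hminusflip k hk
          by_cases hl : k = k0
          · exact hl ▸ this
          · exact hmove k k0 hl this
      right; left
      rw [negP0_eq]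
      ext v
      constructor
      · intro hv
        refine ⟨hsub hv, ?_⟩
        rcases hsub hv with (⟨k', l', hkl', h | h | h | h⟩ | ⟨k', h | h⟩) | ⟨k', h | h | h | h⟩ <;>
          subst h
        · simp [e0_apply]
        · simp [e0_apply]
        · simp [e0_apply]
        · simp [e0_apply]
        · simp [e0_apply]
        · simp [e0_apply]
        · exact ((hnopos k').1 hv).elim
        · exact ((hnopos k').2 hv).elim
        · rw [e0_apply]; simp
        · rw [e0_apply]; simp
      · rintro ⟨hv, hf⟩
        rcases hv with (⟨k', l', hkl', h | h | h | h⟩ | ⟨k', h | h⟩) | ⟨k', h | h | h | h⟩ <;>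
          subst h
        · exact hsum2 k' l' hkl'
        · exact h2 k' l' hkl'
        · exact h3 k' l' hkl'
        · exact h4 k' l' hkl'
        · exact hnorm k'
        · exact hI k'
        · exfalso; rw [e0_apply] at hf; simp at hf; linarith
        · exfalso; rw [e0_apply] at hf; simp at hf; linarith
        · exact hallneg' k'
        · exact hallneg k'
  · -- Case II
    push_neg at hI
    obtain ⟨k1, hk1⟩ := hI
    have hno2 : ∀ k, -((2:ℝ) • δ k) ∉ P := by
      intro m hm
      by_cases hmk : m = k1
      · exact hk1 (hmk ▸ hm)
      have hmk' : k1 ≠ m := fun h => hmk h.symm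
      have hab : δ k1 + δ m ∈ P := hsum2 k1 m hmk'
      have hnab : -δ k1 - δ m ∉ P := by
        intro hx
        have h5 : -δ k1 + δ m ∈ P := addP _ hx _ (hnorm m) _ (mem3 hmk') (by module)
        have h6 : -((2:ℝ) • δ k1) ∈ P :=
          addP _ h5 _ hx _ (mem6 k1) (by module)
        exact hk1 h6
      have hc1 : δ k1 - δ m ∈ P := by
        rcases htot _ (mem2 hmk') with h | h
        · exact h
        · exfalso
          refine hnab (addP _ h _ hm _ (mem4 hmk') ?_)
          module
      have hnc : -(δ k1 - δ m) ∉ P := by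
        intro hx
        refine hnab (addP _ hx _ hm _ (mem4 hmk') ?_)
        module
      refine ncom _ hab ?_ _ hc1 hnc _ (mem5 k1) (by module)
      intro hx
      refine hnab ?_
      have e : -(δ k1 + δ m) = -δ k1 - δ m := by module
      rwa [e] at hx
    have hnsum : ∀ k l, k ≠ l → -δ k - δ l ∉ P := by
      intro k l hkl hx
      have h5 : δ k - δ l ∈ P := addP _ hx _ (hnorm k) _ (mem2 hkl) (by module)
      exact hno2 l (addP _ hx _ h5 _ (mem6 l) (by module))
    have hdiff : ∀ k l, k ≠ l → δ k - δ l ∈ P := by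
      intro k l hkl
      by_contra hcon
      rcases htot _ (mem2 hkl) with h | h
      · exact hcon h
      · refine ncom _ h ?_ _ (hnorm k) (hno2 k) _ (mem1 hkl) (by module)
        rw [neg_neg]
        exact hcon
    have hflipA : ∀ k, ε₁ - δ k ∈ P → -ε₁ + δ k ∈ P := by
      intro k hk
      by_contra hcon
      refine ncom _ hk ?_ _ (hnorm k) (hno2 k) _ (mem7 k) (by module)
      intro hx
      refine hcon ?_
      have e : -(ε₁ - δ k) = -ε₁ + δ k := by module
      rwa [e] at hx
    have hflipB : ∀ k, -ε₁ - δ k ∈ P → ε₁ + δ k ∈ P := by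
      intro k hk
      by_contra hcon
      refine ncom _ hk ?_ _ (hnorm k) (hno2 k) _ (mem9 k) (by module)
      intro hx
      refine hcon ?_
      have e : -(-ε₁ - δ k) = ε₁ + δ k := by module
      rwa [e] at hx
    by_cases hE : ∃ k, ε₁ - δ k ∈ P
    · -- P = Pn
      obtain ⟨ka, hka⟩ := hE
      have hEall : ∀ l, ε₁ - δ l ∈ P := by
        intro l
        by_cases hl : ka = l
        · exact hl ▸ hka
        · exact addP _ hka _ (hdiff ka l hl) _ (mem8 l) (by module)
      have hnegE : ∀ l, -ε₁ + δ l ∈ P := fun l => hflipA l (hEall l)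
      have hnF : ∀ l, -ε₁ - δ l ∉ P := by
        intro l hx
        exact hno2 l (addP _ (hEall l) _ hx _ (mem6 l) (by module))
      have hF : ∀ l, ε₁ + δ l ∈ P := by
        intro l
        rcases htot _ (mem7 l) with h | h
        · exact h
        · exfalso
          refine hnF l ?_
          have e : -(ε₁ + δ l) = -ε₁ - δ l := by module
          rwa [e] at h
      right; right; left
      rw [Pn_eq]
      ext v
      constructor
      · intro hv
        refine ⟨hsub hv, ?_⟩
        rcases hsub hv with (⟨k', l', hkl', h | h | h | h⟩ | ⟨k', h | h⟩) | ⟨k', h | h | h | h⟩ <;>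
          subst h
        · norm_num
        · simp
        · simp
        · exact (hnsum k' l' hkl' hv).elim
        · norm_num
        · exact (hno2 k' hv).elim
        · norm_num
        · simp
        · simp
        · exact (hnF k' hv).elim
      · rintro ⟨hv, hf⟩
        rcases hv with (⟨k', l', hkl', h | h | h | h⟩ | ⟨k', h | h⟩) | ⟨k', h | h | h | h⟩ <;>
          subst h
        · exact hsum2 k' l' hkl'
        · exact hdiff k' l' hkl'
        · have e : -δ k' + δ l' = δ l' - δ k' := by module
          rw [e]; exact hdiff l' k' hkl'.symm
        · exfalso; norm_num at hf
        · exact hnorm k'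
        · exfalso; norm_num at hf
        · exact hF k'
        · exact hEall k'
        · exact hnegE k'
        · exfalso; norm_num at hf
    · -- P = Pnbar
      push_neg at hE
      have hnegE : ∀ k, -ε₁ + δ k ∈ P := by
        intro k
        rcases htot _ (mem8 k) with h | h
        · exact absurd h (hE k)
        · have e : -(ε₁ - δ k) = -ε₁ + δ k := by module
          rwa [e] at h
      have hF : ∀ k, ε₁ + δ k ∈ P := by
        intro k
        rcases htot _ (mem7 k) with h | h
        · exact h
        · have e : -(ε₁ + δ k) = -ε₁ - δ k := by module
          rw [e] at h
          exact hflipB k h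
      have hnF : ∀ k, -ε₁ - δ k ∈ P := by
        intro k
        by_contra hcon
        refine ncom _ (hF k) ?_ _ (hnegE k) ?_ _ (mem5 k) (by module)
        · intro hx
          refine hcon ?_
          have e : -(ε₁ + δ k) = -ε₁ - δ k := by module
          rwa [e] at hx
        · intro hx
          refine hE k ?_
          have e : -(-ε₁ + δ k) = ε₁ - δ k := by module
          rwa [e] at hx
      right; right; right
      rw [Pnbar_eq]
      ext v
      constructor
      · intro hv
        refine ⟨hsub hv, ?_⟩
        rcases hsub hv with (⟨k', l', hkl', h | h | h | h⟩ | ⟨k', h | h⟩) | ⟨k', h | h | h | h⟩ <;>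
          subst h
        · norm_num
        · simp
        · simp
        · exact (hnsum k' l' hkl' hv).elim
        · norm_num
        · exact (hno2 k' hv).elim
        · simp
        · exact (hE k' hv).elim
        · norm_num
        · simp
      · rintro ⟨hv, hf⟩
        rcases hv with (⟨k', l', hkl', h | h | h | h⟩ | ⟨k', h | h⟩) | ⟨k', h | h | h | h⟩ <;>
          subst h
        · exact hsum2 k' l' hkl'
        · exact hdiff k' l' hkl'
        · have e : -δ k' + δ l' = δ l' - δ k' := by module
          rw [e]; exact hdiff l' k' hkl'.symm
        · exfalso; norm_num at hf
        · exact hnorm k'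
        · exfalso; norm_num at hf
        · exact hF k'
        · exfalso; norm_num at hf
        · exact hnegE k'
        · exact hnF k'

end Osp2

open Osp2


theorem stmt_8 (n : ℕ) (hn : 1 ≤ n)
    (P : Set (Osp2.V n)) (hP : P ⊆ Osp2.Δroot n) :
    (IsCominuscule (Osp2.Δroot n) P ↔
      ∃ (τ : Equiv.Perm (Fin n)) (t : Fin n → ℝ), (∀ k, t k = 1 ∨ t k = -1) ∧
        Osp2.act τ t '' P ∈ Osp2.reps n) ∧
    (∀ Q ∈ Osp2.reps n, IsCominuscule (Osp2.Δroot n) Q) ∧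
    (∀ Q ∈ Osp2.reps n, ∀ Q' ∈ Osp2.reps n, Q ≠ Q' →
      ¬ ∃ (τ : Equiv.Perm (Fin n)) (t : Fin n → ℝ), (∀ k, t k = 1 ∨ t k = -1) ∧
        Osp2.act τ t '' Q = Q') := by
  classical
  refine ⟨⟨?_, ?_⟩, reps_comin hn, reps_not_equiv hn⟩
  · intro hc
    set t : Fin n → ℝ := fun k => if (2:ℝ) • δ k ∈ P then 1 else -1 with htdef
    have ht : ∀ k, t k = 1 ∨ t k = -1 := by
      intro k
      by_cases h : (2:ℝ) • δ k ∈ P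
      · exact Or.inl (by simp [htdef, h])
      · exact Or.inr (by simp [htdef, h])
    refine ⟨Equiv.refl _, t, ht, ?_⟩
    have hc' := act_comin (τ := Equiv.refl _) ht hc
    have hact2 : ∀ k, t k = 1 → act (Equiv.refl _) t ((2:ℝ) • δ k) = (2:ℝ) • δ k := by
      intro k hk
      rw [act_smul, act_delta, Equiv.refl_apply, hk, one_smul]
    have hact2' : ∀ k, t k = -1 → act (Equiv.refl _) t (-((2:ℝ) • δ k)) = (2:ℝ) • δ k := by
      intro k hk
      rw [act_neg, act_smul, act_delta, Equiv.refl_apply, hk]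
      module
    have hnorm : ∀ k, (2:ℝ) • δ k ∈ act (Equiv.refl (Fin n)) t '' P := by
      intro k
      by_cases h : (2:ℝ) • δ k ∈ P
      · exact ⟨_, h, hact2 k (by simp [htdef, h])⟩
      · have h2 : (2:ℝ) • δ k ∈ P ∪ -P := hc.1.2.1 ▸ mem5 k
        rcases h2 with h2 | h2
        · exact absurd h2 h
        · rw [Set.mem_neg] at h2
          exact ⟨_, h2, hact2' k (by simp [htdef, h])⟩
    have hcls := classify hn _ hc' hnorm
    rcases hcls with h | h | h | h <;> rw [h] <;>
      simp [reps, Set.mem_insert_iff]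
  · rintro ⟨τ, t, ht, hmem⟩
    have hQ := reps_comin hn _ hmem
    have htc : ∀ k, (t ∘ τ) k = 1 ∨ (t ∘ τ) k = -1 := fun k => ht (τ k)
    have h2 := act_comin (τ := τ.symm) htc hQ
    have heq : act τ.symm (t ∘ τ) '' (act τ t '' P) = P := by
      rw [Set.image_image]
      simp only [act_linv ht]
      exact Set.image_id P
    rwa [heq] at h2
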